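/- Let γ be a real number and set a_n = n^γ for n ≥ 1. Then the sequence (a_n) is slowly increasing, i.e. (∑_{k=1}^n a_k²)/(∑_{k=1}^n a_k)² → 0 as n → ∞, if and only if γ ≥ −1. -/

import Mathlib

open Filter Finset

private lemma aux_icc_range (f : ℕ → ℝ) (hf0 : f 0 = 0) (n : ℕ) :
    ∑ k ∈ Finset.Icc 1 n, f k = ∑ k ∈ Finset.range (n + 1), f k := by
  rw [← Finset.Ico_add_one_right_eq_Icc, Finset.sum_Ico_eq_sum_range, Finset.sum_range_succ']
  simp [hf0, add_comm]

private lemma aux_shift (f : ℕ → ℝ) (n : ℕ) :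
    ∑ k ∈ Finset.Icc 1 n, f k = ∑ i ∈ Finset.range n, f (1 + i) := by
  rw [← Finset.Ico_add_one_right_eq_Icc, Finset.sum_Ico_eq_sum_range]
  simp

/-- The sequence `a_n = n^γ` is slowly increasing if and only if `γ ≥ -1`. -/
theorem stmt_11 (γ : ℝ) :
    Tendsto (fun n : ℕ =>
        (∑ k ∈ Finset.Icc 1 n, ((k : ℝ) ^ γ) ^ 2) /
          (∑ k ∈ Finset.Icc 1 n, (k : ℝ) ^ γ) ^ 2)
      atTop (nhds 0) ↔ -1 ≤ γ := by
  set S : ℕ → ℝ := fun n => ∑ k ∈ Finset.Icc 1 n, (k : ℝ) ^ γ with hSdef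
  set Q : ℕ → ℝ := fun n => ∑ k ∈ Finset.Icc 1 n, ((k : ℝ) ^ γ) ^ 2 with hQdef
  have hQnn : ∀ n, 0 ≤ Q n := fun n => Finset.sum_nonneg fun k _ => sq_nonneg _
  have hSnn : ∀ n, 0 ≤ S n := fun n =>
    Finset.sum_nonneg fun k _ => Real.rpow_nonneg (Nat.cast_nonneg k) _
  have hS1 : ∀ n, 1 ≤ n → (1 : ℝ) ≤ S n := by
    intro n hn
    have h1 : (1 : ℕ) ∈ Finset.Icc 1 n := by simp [hn]
    calc (1 : ℝ) = (1 : ℝ) ^ γ := by rw [Real.one_rpow]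
    _ ≤ S n := by
        have := Finset.single_le_sum (f := fun k : ℕ => (k : ℝ) ^ γ)
          (fun k _ => Real.rpow_nonneg (Nat.cast_nonneg k) _) h1
        simpa using this
  constructor
  · -- necessity
    intro h
    by_contra hc
    push_neg at hc
    have hγ0 : γ ≠ 0 := by linarith
    have hf : Summable (fun k : ℕ => (k : ℝ) ^ γ) := Real.summable_nat_rpow.mpr hc
    have hgeq : ∀ k : ℕ, ((k : ℝ) ^ γ) ^ 2 = (k : ℝ) ^ (γ * 2) := by
      intro k
      rw [Real.rpow_mul (Nat.cast_nonneg k)]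
      norm_num
    have hg : Summable (fun k : ℕ => ((k : ℝ) ^ γ) ^ 2) := by
      rw [summable_congr hgeq]
      exact Real.summable_nat_rpow.mpr (by linarith)
    set L := ∑' k : ℕ, (k : ℝ) ^ γ with hL
    set M := ∑' k : ℕ, ((k : ℝ) ^ γ) ^ 2 with hM
    have hf0 : ((0 : ℕ) : ℝ) ^ γ = 0 := by
      simp [Real.zero_rpow hγ0]
    have hA : Tendsto S atTop (nhds L) := by
      have h1 := hf.hasSum.tendsto_sum_nat
      have h2 := h1.comp (tendsto_add_atTop_nat 1)
      exact h2.congr fun n => (aux_icc_range _ hf0 n).symm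
    have hB : Tendsto Q atTop (nhds M) := by
      have h1 := hg.hasSum.tendsto_sum_nat
      have h2 := h1.comp (tendsto_add_atTop_nat 1)
      exact h2.congr fun n => (aux_icc_range _ (by simp [Real.zero_rpow hγ0]) n).symm
    have hL1 : (1 : ℝ) ≤ L := by
      have := Summable.le_tsum hf 1 (fun j _ => Real.rpow_nonneg (Nat.cast_nonneg j) _)
      simpa using this
    have hM1 : (1 : ℝ) ≤ M := by
      have := Summable.le_tsum hg 1 (fun j _ => sq_nonneg _)
      simpa using this
    have hlim : Tendsto (fun n => Q n / (S n) ^ 2) atTop (nhds (M / L ^ 2)) :=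
      hB.div (hA.pow 2) (by positivity)
    have := tendsto_nhds_unique h hlim
    have hpos : 0 < M / L ^ 2 := by positivity
    rw [← this] at hpos
    exact lt_irrefl _ hpos
  · -- sufficiency
    intro hγ
    rcases le_or_gt γ 0 with hγ0 | hγ0
    · -- -1 ≤ γ ≤ 0
      have hQS : ∀ n, Q n ≤ S n := by
        intro n
        apply Finset.sum_le_sum
        intro k hk
        have hk1 : (1 : ℝ) ≤ (k : ℝ) := by
          have := (Finset.mem_Icc.mp hk).1
          exact_mod_cast this
        exact pow_le_of_le_one (Real.rpow_nonneg (by linarith) _)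
          (Real.rpow_le_one_of_one_le_of_nonpos hk1 hγ0) two_ne_zero
      have hStop : Tendsto S atTop atTop := by
        apply tendsto_atTop_mono _ Real.tendsto_sum_range_one_div_nat_succ_atTop
        intro n
        rw [hSdef]
        simp only
        rw [aux_shift (fun k => (k : ℝ) ^ γ) n]
        apply Finset.sum_le_sum
        intro i _
        have h1 : (1 : ℝ) ≤ ((1 + i : ℕ) : ℝ) := by exact_mod_cast Nat.one_le_iff_ne_zero.mpr (by omega)
        calc 1 / ((i : ℝ) + 1) = ((1 + i : ℕ) : ℝ) ^ (-1 : ℝ) := by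
              rw [Real.rpow_neg_one]
              push_cast
              rw [one_div, add_comm]
        _ ≤ ((1 + i : ℕ) : ℝ) ^ γ := Real.rpow_le_rpow_of_exponent_le h1 hγ
      show Tendsto (fun n : ℕ => Q n / S n ^ 2) atTop (nhds 0)
      apply squeeze_zero' (g := fun n => (S n)⁻¹)
      · filter_upwards with n
        exact div_nonneg (hQnn n) (sq_nonneg _)
      · filter_upwards [eventually_ge_atTop 1] with n hn
        have hs : (0 : ℝ) < S n := lt_of_lt_of_le one_pos (hS1 n hn)
        calc Q n / S n ^ 2 ≤ S n / S n ^ 2 := by gcongr; exact hQS n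
        _ = (S n)⁻¹ := by
            rw [sq, ← div_div, div_self hs.ne']
            exact one_div _
      · exact hStop.inv_tendsto_atTop
    · -- γ > 0
      have key : ∀ n : ℕ, 1 ≤ n → Q n / S n ^ 2 ≤ (2 : ℝ) ^ (γ + 1) / n := by
        intro n hn
        have hnR : (1 : ℝ) ≤ (n : ℝ) := by exact_mod_cast hn
        have hnpos : (0 : ℝ) < n := by linarith
        have hs : (0 : ℝ) < S n := lt_of_lt_of_le one_pos (hS1 n hn)
        -- Q n ≤ n^γ * S n
        have hQ : Q n ≤ (n : ℝ) ^ γ * S n := by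
          rw [hQdef, hSdef, Finset.mul_sum]
          apply Finset.sum_le_sum
          intro k hk
          have hkn : (k : ℝ) ≤ (n : ℝ) := by exact_mod_cast (Finset.mem_Icc.mp hk).2
          have hknn : (0 : ℝ) ≤ (k : ℝ) := Nat.cast_nonneg k
          rw [sq]
          exact mul_le_mul_of_nonneg_right
            (Real.rpow_le_rpow hknn hkn hγ0.le) (Real.rpow_nonneg hknn _)
        -- S n ≥ (n/2)^(γ+1)
        have hhalf : (0 : ℝ) < (n : ℝ) / 2 := by linarith
        have hSlow : ((n : ℝ) / 2) ^ (γ + 1) ≤ S n := by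
          have hsub : Finset.Icc (n / 2 + 1) n ⊆ Finset.Icc 1 n := by
            apply Finset.Icc_subset_Icc_left; omega
          have h1 : ∑ k ∈ Finset.Icc (n / 2 + 1) n, (k : ℝ) ^ γ ≤ S n :=
            Finset.sum_le_sum_of_subset_of_nonneg hsub
              (fun k _ _ => Real.rpow_nonneg (Nat.cast_nonneg k) _)
          have hcard : (Finset.Icc (n / 2 + 1) n).card = n - n / 2 := by
            rw [Nat.card_Icc]; omega
          have h2 : ((n - n / 2 : ℕ) : ℝ) * ((n : ℝ) / 2) ^ γ ≤
              ∑ k ∈ Finset.Icc (n / 2 + 1) n, (k : ℝ) ^ γ := by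
            rw [← hcard]
            have := Finset.card_nsmul_le_sum (Finset.Icc (n / 2 + 1) n)
              (fun k : ℕ => (k : ℝ) ^ γ) (((n : ℝ) / 2) ^ γ) ?_
            · simpa [nsmul_eq_mul] using this
            · intro k hk
              have hk' : n / 2 + 1 ≤ k := (Finset.mem_Icc.mp hk).1
              have : (n : ℝ) / 2 ≤ (k : ℝ) := by
                have h3 : n ≤ 2 * (n / 2 + 1) := by omega
                have h4 : ((n : ℝ)) ≤ 2 * ((n / 2 + 1 : ℕ) : ℝ) := by exact_mod_cast h3
                have h5 : ((n / 2 + 1 : ℕ) : ℝ) ≤ (k : ℝ) := by exact_mod_cast hk'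
                linarith
              exact Real.rpow_le_rpow hhalf.le this hγ0.le
          have h6 : (n : ℝ) / 2 ≤ ((n - n / 2 : ℕ) : ℝ) := by
            rw [Nat.cast_sub (Nat.div_le_self n 2)]
            have := Nat.cast_div_le (α := ℝ) (m := n) (n := 2)
            push_cast at this ⊢
            linarith
          calc ((n : ℝ) / 2) ^ (γ + 1) = ((n : ℝ) / 2) ^ γ * ((n : ℝ) / 2) :=
                Real.rpow_add_one hhalf.ne' γ
          _ ≤ ((n : ℝ) / 2) ^ γ * ((n - n / 2 : ℕ) : ℝ) := by
              exact mul_le_mul_of_nonneg_left h6 (Real.rpow_nonneg hhalf.le _)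
          _ = ((n - n / 2 : ℕ) : ℝ) * ((n : ℝ) / 2) ^ γ := mul_comm _ _
          _ ≤ _ := le_trans h2 h1
        have hhalfpos : (0 : ℝ) < ((n : ℝ) / 2) ^ (γ + 1) := Real.rpow_pos_of_pos hhalf _
        calc Q n / S n ^ 2 ≤ ((n : ℝ) ^ γ * S n) / S n ^ 2 := by gcongr
        _ = (n : ℝ) ^ γ / S n := by rw [sq]; field_simp
        _ ≤ (n : ℝ) ^ γ / ((n : ℝ) / 2) ^ (γ + 1) :=
            div_le_div_of_nonneg_left (Real.rpow_nonneg hnpos.le _) hhalfpos hSlow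
        _ = (2 : ℝ) ^ (γ + 1) / n := by
            rw [Real.div_rpow hnpos.le (by norm_num), Real.rpow_add_one hnpos.ne' γ]
            have h2p : (0 : ℝ) < (2 : ℝ) ^ (γ + 1) := Real.rpow_pos_of_pos two_pos _
            have hnγ : (0 : ℝ) < (n : ℝ) ^ γ := Real.rpow_pos_of_pos hnpos _
            field_simp
      show Tendsto (fun n : ℕ => Q n / S n ^ 2) atTop (nhds 0)
      apply squeeze_zero' (g := fun n : ℕ => (2 : ℝ) ^ (γ + 1) / (n : ℝ))
      · filter_upwards with n
        exact div_nonneg (hQnn n) (sq_nonneg _)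
      · filter_upwards [eventually_ge_atTop 1] with n hn
        exact key n hn
      · have h1 : Tendsto (fun n : ℕ => ((n : ℝ))⁻¹) atTop (nhds 0) :=
          tendsto_inv_atTop_zero.comp tendsto_natCast_atTop_atTop
        have := h1.const_mul ((2 : ℝ) ^ (γ + 1))
        simpa [div_eq_mul_inv] using this
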